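/- The two asymptotic directions defined by the quadratic equation T₁du² + T₂dudv + T₃dv² = 0, with T₁ = e₁f₂ - e₂f₁, T₂ = e₁g₂ - e₂g₁, T₃ = f₁g₂ - f₂g₁, are orthogonal with respect to the first fundamental form E du² + 2F dudv + G dv² at a point if and only if E T₃ - F T₂ + G T₁ = 0, which equals 2(EG - F²) k_N; hence (at points with real distinct asymptotic directions) the asymptotic directions are orthogonal if and only if the normal curvature k_N vanishes. -/
import Mathlib


/-- the asymptotic directions (roots of `T₁du² + T₂dudv + T₃dv² = 0`) are
orthogonal with respect to the first fundamental form iff `E T₃ - F T₂ + G T₁ = 0`,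
which equals `2(EG - F²) k_N`; hence (at points with real distinct asymptotic
directions) the asymptotic directions are orthogonal iff `k_N = 0`. -/
theorem stmt8 (E F G e₁ f₁ g₁ e₂ f₂ g₂ : ℝ) (hpos : 0 < E * G - F ^ 2)
    (T₁ T₂ T₃ kN : ℝ)
    (hT₁ : T₁ = e₁ * f₂ - e₂ * f₁) (hT₂ : T₂ = e₁ * g₂ - e₂ * g₁)
    (hT₃ : T₃ = f₁ * g₂ - f₂ * g₁)
    (hkN : kN = (E * (f₁ * g₂ - f₂ * g₁) - F * (e₁ * g₂ - e₂ * g₁) +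
      G * (e₁ * f₂ - e₂ * f₁)) / (2 * (E * G - F ^ 2)))
    -- the asymptotic equation is nondegenerate (real distinct directions)
    (hT : ¬(T₁ = 0 ∧ T₂ = 0 ∧ T₃ = 0)) :
    E * T₃ - F * T₂ + G * T₁ = 2 * (E * G - F ^ 2) * kN ∧
    ∀ a b c d : ℝ, (a, b) ≠ (0, 0) → (c, d) ≠ (0, 0) → a * d - b * c ≠ 0 →
      T₁ * a ^ 2 + T₂ * a * b + T₃ * b ^ 2 = 0 →
      T₁ * c ^ 2 + T₂ * c * d + T₃ * d ^ 2 = 0 →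
      (E * a * c + F * (a * d + b * c) + G * b * d = 0 ↔ kN = 0) := by
  have h2 : (2 : ℝ) * (E * G - F ^ 2) ≠ 0 := by
    have : (0:ℝ) < 2 * (E * G - F ^ 2) := by linarith
    exact ne_of_gt this
  have heq : E * T₃ - F * T₂ + G * T₁ = 2 * (E * G - F ^ 2) * kN := by
    rw [hkN, hT₁, hT₂, hT₃]
    field_simp
  have hkL : kN = 0 ↔ E * T₃ - F * T₂ + G * T₁ = 0 := by
    rw [heq]
    constructor
    · intro h; rw [h]; ring
    · intro h
      exact (mul_eq_zero.mp h).resolve_left h2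
  refine ⟨heq, ?_⟩
  intro a b c d _ _ hdet hq1 hq2
  -- the coefficient vector (bd, ad+bc, ac) is nonzero
  have hcne : ¬(b * d = 0 ∧ a * d + b * c = 0 ∧ a * c = 0) := by
    rintro ⟨h1, h2', h3⟩
    apply hdet
    have hsq : (a * d - b * c) ^ 2 = 0 := by
      have : (a * d - b * c) ^ 2 = (a * d + b * c) ^ 2 - 4 * (a * c) * (b * d) := by ring
      rw [this, h1, h2', h3]; ring
    exact pow_eq_zero_iff (by norm_num) |>.mp hsq
  -- Vieta-style relations
  have r1 : T₁ * (a * d + b * c) + T₂ * (b * d) = 0 := by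
    have h : (a * d - b * c) * (T₁ * (a * d + b * c) + T₂ * (b * d)) = 0 := by
      linear_combination d ^ 2 * hq1 - b ^ 2 * hq2
    exact (mul_eq_zero.mp h).resolve_left hdet
  have r2 : T₃ * (a * d + b * c) + T₂ * (a * c) = 0 := by
    have h : (a * d - b * c) * (T₃ * (a * d + b * c) + T₂ * (a * c)) = 0 := by
      linear_combination a ^ 2 * hq2 - c ^ 2 * hq1
    exact (mul_eq_zero.mp h).resolve_left hdet
  have r3 : T₁ * (a * c) - T₃ * (b * d) = 0 := by
    have h : (a * d - b * c) * (T₁ * (a * c) - T₃ * (b * d)) = 0 := by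
      linear_combination c * d * hq1 - a * b * hq2
    exact (mul_eq_zero.mp h).resolve_left hdet
  set S : ℝ := E * a * c + F * (a * d + b * c) + G * b * d with hSdef
  set L : ℝ := E * T₃ - F * T₂ + G * T₁ with hLdef
  have id1 : T₁ * S = (b * d) * L := by
    rw [hSdef, hLdef]; linear_combination E * r3 + F * r1
  have id2 : T₂ * S = -(a * d + b * c) * L := by
    rw [hSdef, hLdef]; linear_combination E * r2 + G * r1
  have id3 : T₃ * S = (a * c) * L := by
    rw [hSdef, hLdef]; linear_combination F * r2 - G * r3
  have hT' : T₁ ≠ 0 ∨ T₂ ≠ 0 ∨ T₃ ≠ 0 := by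
    by_contra h
    push_neg at h
    exact hT ⟨h.1, h.2.1, h.2.2⟩
  rw [hkL]
  constructor
  · intro hS
    rcases hT' with h | h | h
    · by_cases hc : b * d = 0
      · exfalso
        apply hcne
        refine ⟨hc, ?_, ?_⟩
        · have : T₁ * (a * d + b * c) = 0 := by
            linear_combination r1 - T₂ * hc
          exact (mul_eq_zero.mp this).resolve_left h
        · have : T₁ * (a * c) = 0 := by linear_combination r3 + T₃ * hc
          exact (mul_eq_zero.mp this).resolve_left h
      · have : b * d * L = 0 := by rw [← id1, hS, mul_zero]
        exact (mul_eq_zero.mp this).resolve_left hc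
    · by_cases hc : a * d + b * c = 0
      · exfalso
        apply hcne
        refine ⟨?_, hc, ?_⟩
        · have : T₂ * (b * d) = 0 := by linear_combination r1 - T₁ * hc
          exact (mul_eq_zero.mp this).resolve_left h
        · have : T₂ * (a * c) = 0 := by linear_combination r2 - T₃ * hc
          exact (mul_eq_zero.mp this).resolve_left h
      · have : -(a * d + b * c) * L = 0 := by rw [← id2, hS, mul_zero]
        have hc' : -(a * d + b * c) ≠ 0 := neg_ne_zero.mpr hc
        exact (mul_eq_zero.mp this).resolve_left hc'
    · by_cases hc : a * c = 0
      · exfalso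
        apply hcne
        refine ⟨?_, ?_, hc⟩
        · have : T₃ * (b * d) = 0 := by linear_combination -r3 + T₁ * hc
          exact (mul_eq_zero.mp this).resolve_left h
        · have : T₃ * (a * d + b * c) = 0 := by linear_combination r2 - T₂ * hc
          exact (mul_eq_zero.mp this).resolve_left h
      · have : a * c * L = 0 := by rw [← id3, hS, mul_zero]
        exact (mul_eq_zero.mp this).resolve_left hc
  · intro hL
    rcases hT' with h | h | h
    · have : T₁ * S = 0 := by rw [id1, hL, mul_zero]
      exact (mul_eq_zero.mp this).resolve_left h
    · have : T₂ * S = 0 := by rw [id2, hL, mul_zero]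
      exact (mul_eq_zero.mp this).resolve_left h
    · have : T₃ * S = 0 := by rw [id3, hL, mul_zero]
      exact (mul_eq_zero.mp this).resolve_left h
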